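/- Let R_s be a real n_y×n_s matrix with rank(R_s) = n_s = n_y, let R_f be a real n_y×n_f matrix with rank(R_f) = n_f ≤ n_y, let (X, U_s, U_f, Σ_s, Σ_f) be a GSVD factorization of (R_s, R_f), let R = [R_s R_f], and let μ > 0. Then X·(XᵀX + μI)⁻¹·Xᵀ = X·Xᵀ·(X·Xᵀ + μI)⁻¹ = R·Rᵀ·(R·Rᵀ + μI)⁻¹. -/

import Mathlib

open Matrix

section Aux

variable {n : Type*} [Fintype n] [DecidableEq n]

lemma aux_posDef (X : Matrix n n ℝ) (μ : ℝ) (hμ : 0 < μ) :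
    (Xᵀ * X + μ • (1 : Matrix n n ℝ)).PosDef := by
  have h1 : (Xᵀ * X).PosSemidef := by
    simpa [conjTranspose_eq_transpose_of_trivial] using posSemidef_conjTranspose_mul_self X
  have h2 : (μ • (1 : Matrix n n ℝ)).PosDef := by
    rw [smul_one_eq_diagonal]
    exact posDef_diagonal_iff.mpr fun _ => hμ
  exact Matrix.PosDef.posSemidef_add h1 h2

lemma aux_key (X : Matrix n n ℝ) (μ : ℝ) (hμ : 0 < μ) :
    X * (Xᵀ * X + μ • (1 : Matrix n n ℝ))⁻¹ * Xᵀ =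
      X * Xᵀ * (X * Xᵀ + μ • (1 : Matrix n n ℝ))⁻¹ := by
  set A := Xᵀ * X + μ • (1 : Matrix n n ℝ) with hAdef
  set B := X * Xᵀ + μ • (1 : Matrix n n ℝ) with hBdef
  have hA : A.PosDef := aux_posDef X μ hμ
  have hB : B.PosDef := by
    have := aux_posDef Xᵀ μ hμ
    simpa [hBdef] using this
  have hAd : IsUnit A.det := A.isUnit_iff_isUnit_det.mp hA.isUnit
  have hBd : IsUnit B.det := B.isUnit_iff_isUnit_det.mp hB.isUnit
  have hcomm : Xᵀ * B = A * Xᵀ := by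
    simp only [hAdef, hBdef, Matrix.mul_add, Matrix.add_mul, Matrix.mul_smul,
      Matrix.smul_mul, Matrix.mul_one, Matrix.one_mul, Matrix.mul_assoc]
  have h : A⁻¹ * Xᵀ = Xᵀ * B⁻¹ := by
    have e1 : A⁻¹ * Xᵀ = A⁻¹ * (Xᵀ * (B * B⁻¹)) := by
      rw [Matrix.mul_nonsing_inv _ hBd, Matrix.mul_one]
    rw [e1, ← Matrix.mul_assoc Xᵀ, hcomm, ← Matrix.mul_assoc, ← Matrix.mul_assoc,
      Matrix.nonsing_inv_mul _ hAd, Matrix.one_mul]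
  rw [Matrix.mul_assoc X, Matrix.mul_assoc X, ← h, ← Matrix.mul_assoc]

lemma aux_conj {q : Type*} [Fintype q] [DecidableEq q] (X : Matrix n n ℝ) (D : Matrix n q ℝ)
    (U : Matrix q q ℝ) (hU : Uᵀ * U = 1) :
    (X * D * Uᵀ) * (X * D * Uᵀ)ᵀ = X * (D * Dᵀ) * Xᵀ := by
  rw [Matrix.transpose_mul, Matrix.transpose_mul, Matrix.transpose_transpose]
  calc X * D * Uᵀ * (U * (Dᵀ * Xᵀ)) = X * D * (Uᵀ * U) * (Dᵀ * Xᵀ) := by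
        simp only [Matrix.mul_assoc]
    _ = X * (D * Dᵀ) * Xᵀ := by rw [hU, Matrix.mul_one]; simp only [Matrix.mul_assoc]

end Aux

theorem regularised_two_array_equals_single_array (nf k : ℕ)
    (Rs : Matrix (Fin nf ⊕ Fin k) (Fin nf ⊕ Fin k) ℝ)
    (Rf : Matrix (Fin nf ⊕ Fin k) (Fin nf) ℝ)
    (hRs : Rs.rank = nf + k) (hRf : Rf.rank = nf)
    (X Us : Matrix (Fin nf ⊕ Fin k) (Fin nf ⊕ Fin k) ℝ)
    (Uf : Matrix (Fin nf) (Fin nf) ℝ) (σs σf : Fin nf → ℝ)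
    (hX : IsUnit X)
    (hUs : Usᵀ * Us = 1)
    (hUf : Ufᵀ * Uf = 1)
    (hσs : ∀ i, 0 < σs i)
    (hσf : ∀ i, 0 < σf i)
    (hσ : ∀ i, σs i ^ 2 + σf i ^ 2 = 1)
    (hRsX : Rs = X * fromBlocks (diagonal σs) 0 0 (1 : Matrix (Fin k) (Fin k) ℝ) * Usᵀ)
    (hRfX : Rf = X * fromRows (diagonal σf) (0 : Matrix (Fin k) (Fin nf) ℝ) * Ufᵀ)
    (μ : ℝ) (hμ : 0 < μ) :
    X * (Xᵀ * X + μ • (1 : Matrix (Fin nf ⊕ Fin k) (Fin nf ⊕ Fin k) ℝ))⁻¹ * Xᵀ =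
      X * Xᵀ * (X * Xᵀ + μ • (1 : Matrix (Fin nf ⊕ Fin k) (Fin nf ⊕ Fin k) ℝ))⁻¹ ∧
    X * (Xᵀ * X + μ • (1 : Matrix (Fin nf ⊕ Fin k) (Fin nf ⊕ Fin k) ℝ))⁻¹ * Xᵀ =
      fromCols Rs Rf * (fromCols Rs Rf)ᵀ *
        (fromCols Rs Rf * (fromCols Rs Rf)ᵀ +
          μ • (1 : Matrix (Fin nf ⊕ Fin k) (Fin nf ⊕ Fin k) ℝ))⁻¹ := by
  have hs : Rs * Rsᵀ =
      X * fromBlocks (diagonal fun i => σs i ^ 2) 0 0 (1 : Matrix (Fin k) (Fin k) ℝ) * Xᵀ := by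
    rw [hRsX, aux_conj X _ Us hUs, fromBlocks_transpose, fromBlocks_multiply]
    simp [diagonal_mul_diagonal, sq]
  have hf : Rf * Rfᵀ =
      X * fromBlocks (diagonal fun i => σf i ^ 2) 0 0 (0 : Matrix (Fin k) (Fin k) ℝ) * Xᵀ := by
    rw [hRfX, aux_conj X _ Uf hUf, transpose_fromRows, fromRows_mul_fromCols]
    simp [diagonal_mul_diagonal, sq]
  have hRR : fromCols Rs Rf * (fromCols Rs Rf)ᵀ = X * Xᵀ := by
    rw [transpose_fromCols, fromCols_mul_fromRows, hs, hf, Matrix.mul_assoc,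
      Matrix.mul_assoc, ← Matrix.mul_add, ← Matrix.add_mul, fromBlocks_add,
      diagonal_add]
    have : (diagonal fun i => σs i ^ 2 + σf i ^ 2) = (1 : Matrix (Fin nf) (Fin nf) ℝ) := by
      have h1 : (fun i => σs i ^ 2 + σf i ^ 2) = fun _ => (1 : ℝ) := funext hσ
      rw [h1, diagonal_one]
    rw [this]
    simp [fromBlocks_one]
  exact ⟨aux_key X μ hμ, by rw [hRR, aux_key X μ hμ]⟩
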